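/- arXiv:2009.07370 — 8 statements merged into one kernel-verified Lean document; each statement's English description precedes it below -/
import Mathlib

section
/- Let θ ∈ ℝ, ξ > 0, v = ξ·(1 − cos θ, −sin θ), and R x = L_θ x + v. Then for every x ∈ ℝ² and n ∈ ℕ, −‖x‖² + 2ξ² sin²(nθ/2) ≤ ‖Rⁿ x‖² ≤ 3‖x‖² + 6ξ² sin²(nθ/2). -/
/-- The 2×2 rotation matrix by angle θ. -/
noncomputable def L (θ : ℝ) : Matrix (Fin 2) (Fin 2) ℝ :=
  !![Real.cos θ, -Real.sin θ; Real.sin θ, Real.cos θ]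

/-- View a plain vector in `Fin 2 → ℝ` as an element of the Euclidean plane. -/
def toE (x : Fin 2 → ℝ) : EuclideanSpace ℝ (Fin 2) := WithLp.toLp 2 x

/-- Matrix–vector multiplication on the Euclidean plane. -/
noncomputable def mulVecE (M : Matrix (Fin 2) (Fin 2) ℝ) (x : EuclideanSpace ℝ (Fin 2)) :
    EuclideanSpace ℝ (Fin 2) := WithLp.toLp 2 (M.mulVec x)

theorem stmt_6 (θ ξ : ℝ) (hξ : 0 < ξ) (v : EuclideanSpace ℝ (Fin 2))
    (hv : v = ξ • toE ![1 - Real.cos θ, -Real.sin θ])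
    (R : EuclideanSpace ℝ (Fin 2) → EuclideanSpace ℝ (Fin 2))
    (hR : ∀ x, R x = mulVecE (L θ) x + v) :
    ∀ (x : EuclideanSpace ℝ (Fin 2)) (n : ℕ),
      -‖x‖ ^ 2 + 2 * ξ ^ 2 * Real.sin (n * θ / 2) ^ 2 ≤ ‖R^[n] x‖ ^ 2 ∧
      ‖R^[n] x‖ ^ 2 ≤ 3 * ‖x‖ ^ 2 + 6 * ξ ^ 2 * Real.sin (n * θ / 2) ^ 2 := by
  intro x n
  -- closed form for the iterates
  have key : ∀ (m : ℕ) (y : EuclideanSpace ℝ (Fin 2)),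
      (R^[m] y) 0 = Real.cos (m * θ) * y 0 - Real.sin (m * θ) * y 1
          + ξ * (1 - Real.cos (m * θ)) ∧
      (R^[m] y) 1 = Real.sin (m * θ) * y 0 + Real.cos (m * θ) * y 1
          - ξ * Real.sin (m * θ) := by
    intro m
    induction m with
    | zero => intro y; simp
    | succ k ih =>
      intro y
      have h1 : R^[k+1] y = R (R^[k] y) := Function.iterate_succ_apply' R k y
      obtain ⟨h0, h1'⟩ := ih y
      have hc : ((k : ℝ) + 1) * θ = k * θ + θ := by ring
      rw [h1, hR]
      constructor <;>
      · simp only [mulVecE, L, hv, toE, PiLp.add_apply, PiLp.smul_apply,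
          Matrix.mulVec, dotProduct, PiLp.toLp_apply, Fin.sum_univ_two,
          Matrix.cons_val', Matrix.cons_val_zero, Matrix.cons_val_one,
          Matrix.head_cons, Matrix.empty_val', Matrix.cons_val_fin_one,
          Matrix.head_fin_const, smul_eq_mul, Nat.cast_succ, Matrix.of_apply]
        rw [h0, h1', hc, Real.cos_add, Real.sin_add]
        ring
  obtain ⟨h0, h1⟩ := key n x
  have hnorm : ∀ (y : EuclideanSpace ℝ (Fin 2)), ‖y‖ ^ 2 = y 0 ^ 2 + y 1 ^ 2 := by
    intro y
    rw [EuclideanSpace.norm_eq]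
    rw [Real.sq_sqrt (by positivity)]
    simp [Fin.sum_univ_two, sq_abs]
  have hs : Real.sin (n * θ / 2) ^ 2 = 1 / 2 - Real.cos (n * θ) / 2 := by
    have h2 : 2 * ((n : ℝ) * θ / 2) = (n : ℝ) * θ := by ring
    rw [Real.sin_sq_eq_half_sub, h2]
  have hpy : Real.sin (n * θ) ^ 2 + Real.cos (n * θ) ^ 2 = 1 :=
    Real.sin_sq_add_cos_sq _
  rw [hnorm (R^[n] x), hnorm x, h0, h1, hs]
  set c := Real.cos (n * θ)
  set s := Real.sin (n * θ)
  constructor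
  · nlinarith [sq_nonneg (2 * (c * x 0 - s * x 1) + ξ * (1 - c)),
      sq_nonneg (2 * (s * x 0 + c * x 1) - ξ * s), sq_nonneg (x 0), sq_nonneg (x 1)]
  · nlinarith [sq_nonneg (2 * (c * x 0 - s * x 1) - ξ * (1 - c)),
      sq_nonneg (2 * (s * x 0 + c * x 1) + ξ * s), sq_nonneg (x 0), sq_nonneg (x 1)]
end

section
/- Let θ ∈ ℝ, ξ > 0, v = ξ·(1 − cos θ, −sin θ), and R x = L_θ x + v. Then for every n ∈ ℕ and x = (x₁, x₂) ∈ ℝ², ‖Rⁿ x‖² = ‖x‖² − 4ξ x₁ sin²(nθ/2) − 4ξ x₂ sin(nθ/2)cos(nθ/2) + 4ξ² sin²(nθ/2). -/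
theorem stmt_7 (θ ξ : ℝ) (hξ : 0 < ξ) (v : EuclideanSpace ℝ (Fin 2))
    (hv : v = ξ • toE ![1 - Real.cos θ, -Real.sin θ])
    (R : EuclideanSpace ℝ (Fin 2) → EuclideanSpace ℝ (Fin 2))
    (hR : ∀ x, R x = mulVecE (L θ) x + v) :
    ∀ (n : ℕ) (x : EuclideanSpace ℝ (Fin 2)),
      ‖R^[n] x‖ ^ 2 = ‖x‖ ^ 2 - 4 * ξ * x 0 * Real.sin (n * θ / 2) ^ 2
        - 4 * ξ * x 1 * Real.sin (n * θ / 2) * Real.cos (n * θ / 2)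
        + 4 * ξ ^ 2 * Real.sin (n * θ / 2) ^ 2 := by
  intro n x
  have hcoord : ∀ (m : ℕ) (y : EuclideanSpace ℝ (Fin 2)),
      (R^[m] y) 0 = Real.cos (m * θ) * (y 0 - ξ) - Real.sin (m * θ) * y 1 + ξ ∧
      (R^[m] y) 1 = Real.sin (m * θ) * (y 0 - ξ) + Real.cos (m * θ) * y 1 := by
    intro m y
    induction m with
    | zero => simp
    | succ k ih =>
      rw [Function.iterate_succ_apply']
      set z := R^[k] y with hz
      have h0 : (R z) 0 = Real.cos θ * z 0 - Real.sin θ * z 1 + ξ * (1 - Real.cos θ) := by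
        rw [hR, hv]
        show (mulVecE (L θ) z) 0 + (ξ • toE ![1 - Real.cos θ, -Real.sin θ]) 0
          = Real.cos θ * z 0 - Real.sin θ * z 1 + ξ * (1 - Real.cos θ)
        simp [mulVecE, L, toE, Matrix.mulVec, dotProduct, Fin.sum_univ_two]
        ring
      have h1 : (R z) 1 = Real.sin θ * z 0 + Real.cos θ * z 1 + ξ * (-Real.sin θ) := by
        rw [hR, hv]
        show (mulVecE (L θ) z) 1 + (ξ • toE ![1 - Real.cos θ, -Real.sin θ]) 1
          = Real.sin θ * z 0 + Real.cos θ * z 1 + ξ * (-Real.sin θ)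
        simp [mulVecE, L, toE, Matrix.mulVec, dotProduct, Fin.sum_univ_two]
      have hk : ((k : ℝ) + 1) * θ = k * θ + θ := by ring
      constructor
      · rw [h0, ih.1, ih.2]
        push_cast
        rw [hk, Real.cos_add, Real.sin_add]
        ring
      · rw [h1, ih.1, ih.2]
        push_cast
        rw [hk, Real.cos_add, Real.sin_add]
        ring
  have hnorm : ∀ (y : EuclideanSpace ℝ (Fin 2)), ‖y‖ ^ 2 = y 0 ^ 2 + y 1 ^ 2 := by
    intro y
    rw [EuclideanSpace.norm_eq, Real.sq_sqrt (by positivity)]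
    simp [Fin.sum_univ_two, sq_abs]
  obtain ⟨h0, h1⟩ := hcoord n x
  rw [hnorm, hnorm, h0, h1]
  have hs : Real.sin (n * θ / 2) ^ 2 = (1 - Real.cos (n * θ)) / 2 := by
    have := Real.sin_sq_eq_half_sub (n * θ / 2)
    rw [show 2 * (n * θ / 2) = (n:ℝ) * θ by ring] at this
    linarith
  have hsc : Real.sin (n * θ / 2) * Real.cos (n * θ / 2) = Real.sin (n * θ) / 2 := by
    have := Real.sin_two_mul (n * θ / 2)
    rw [show 2 * (n * θ / 2) = n * θ by ring] at this
    linarith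
  have hpy := Real.sin_sq_add_cos_sq (n * θ)
  linear_combination ((x 0 - ξ)^2 + (x 1)^2) * hpy + (4*ξ*x 0 - 4*ξ^2) * hs + (4*ξ*x 1) * hsc
end

section
/- For any C > 0 and any n ≥ 1, ∑_{k ≥ n+1} (n!/k!)² < 1/(n(n+2)). Consequently, if S_n := 4∑_{k ≥ 1} ξ_k² sin²(π n!/k!) with 0 < ξ_k ≤ ξ₁, then S_n ≤ 4π²ξ₁²/(n(n+2)), and S_n → 0 as n → ∞. -/
open Real Nat

lemma key1 (n k : ℕ) : ((n ! : ℝ) / (n + 1 + k)!) ≤ (1/((n:ℝ)+1))^(k+1) := by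
  have h1 : (n ! : ℕ) * (n+1)^(k+1) ≤ (n+1+k)! := by
    have := Nat.factorial_mul_pow_le_factorial (m := n) (n := k+1)
    simpa [Nat.add_comm, Nat.add_assoc, Nat.add_left_comm] using this
  have h2 : ((n ! : ℝ)) * ((n:ℝ)+1)^(k+1) ≤ ((n+1+k)! : ℝ) := by exact_mod_cast h1
  rw [div_le_iff₀ (by positivity), one_div, inv_pow, inv_mul_eq_div, le_div_iff₀ (by positivity)]
  linarith

lemma keyS (n : ℕ) (hn : 1 ≤ n) : Summable (fun k : ℕ => ((n ! : ℝ) / (n + 1 + k)!) ^ 2) := by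
  set r : ℝ := 1/((n:ℝ)+1) with hr
  have hr1 : r < 1 := by rw [hr, div_lt_one (by positivity)]; norm_num; exact hn
  have hg : Summable (fun k : ℕ => r^2 * (r^2)^k) :=
    (summable_geometric_of_lt_one (by positivity) (by nlinarith [show (0:ℝ) ≤ r by positivity])).mul_left _
  refine Summable.of_nonneg_of_le (fun k => by positivity) (fun k => ?_) hg
  calc ((n ! : ℝ) / (n + 1 + k)!) ^ 2 ≤ ((1/((n:ℝ)+1))^(k+1))^2 :=
        pow_le_pow_left₀ (by positivity) (key1 n k) 2
    _ = r^2 * (r^2)^k := by rw [hr]; ring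

lemma key2 (n : ℕ) (hn : 1 ≤ n) :
    ∑' k : ℕ, ((n ! : ℝ) / (n + 1 + k)!) ^ 2 < 1 / ((n:ℝ) * (n + 2)) := by
  set r : ℝ := 1/((n:ℝ)+1) with hr
  have hn0 : (n:ℝ) ≠ 0 := by positivity
  have hr1 : r < 1 := by rw [hr, div_lt_one (by positivity)]; norm_num; exact hn
  have hr0 : (0:ℝ) ≤ r := by positivity
  have hg : Summable (fun k : ℕ => r^2 * (r^2)^k) :=
    (summable_geometric_of_lt_one (by positivity) (by nlinarith)).mul_left _
  have hle : ∀ k : ℕ, ((n ! : ℝ) / (n + 1 + k)!) ^ 2 ≤ r^2 * (r^2)^k := by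
    intro k
    calc ((n ! : ℝ) / (n + 1 + k)!) ^ 2 ≤ ((1/((n:ℝ)+1))^(k+1))^2 :=
          pow_le_pow_left₀ (by positivity) (key1 n k) 2
      _ = r^2 * (r^2)^k := by rw [hr]; ring
  have hlt : ((n ! : ℝ) / (n + 1 + 1)!) ^ 2 < r^2 * (r^2)^1 := by
    have hfac : ((n + 1 + 1)! : ℝ) = ((n:ℝ)+2) * ((n:ℝ)+1) * (n !) := by
      push_cast [Nat.factorial_succ]; ring
    have hn1 : (0:ℝ) < (n ! : ℝ) := by exact_mod_cast Nat.factorial_pos n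
    have hval : ((n ! : ℝ) / (n + 1 + 1)!) = 1/(((n:ℝ)+2)*((n:ℝ)+1)) := by
      rw [hfac]; field_simp
    rw [hval, hr, div_pow, div_pow, one_pow, pow_one]
    have hlt2 : ((n:ℝ)+1)^2 * ((n:ℝ)+1)^2 < ((((n:ℝ)+2))*((n:ℝ)+1))^2 := by
      nlinarith [show (1:ℝ) ≤ (n:ℝ) from by exact_mod_cast hn]
    calc 1/((((n:ℝ)+2))*((n:ℝ)+1))^2 < 1/(((n:ℝ)+1)^2*((n:ℝ)+1)^2) :=
          one_div_lt_one_div_of_lt (by positivity) hlt2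
      _ = 1/((n:ℝ)+1)^2 * (1/((n:ℝ)+1)^2) := by field_simp
  have hmain := Summable.tsum_lt_tsum hle hlt (keyS n hn) hg
  calc ∑' k : ℕ, ((n ! : ℝ) / (n + 1 + k)!) ^ 2 < ∑' k : ℕ, r^2 * (r^2)^k := hmain
    _ = 1 / ((n:ℝ) * (n + 2)) := by
        rw [tsum_mul_left, tsum_geometric_of_lt_one (by positivity) (by nlinarith), hr]
        rw [div_pow, one_pow]
        have h12 : (1:ℝ) - 1/((n:ℝ)+1)^2 = ((n:ℝ)*((n:ℝ)+2))/(((n:ℝ)+1)^2) := by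
          field_simp; ring
        rw [h12, inv_div]
        field_simp

lemma keyT (n : ℕ) : Summable (fun k : ℕ => ((n ! : ℝ) / (k + 1)!) ^ 2) := by
  have hg : Summable (fun k : ℕ => ((n ! : ℝ))^2 * ((1/4:ℝ))^k) :=
    (summable_geometric_of_lt_one (by norm_num) (by norm_num)).mul_left _
  refine Summable.of_nonneg_of_le (fun k => by positivity) (fun k => ?_) hg
  have h1 : (2:ℕ)^k ≤ (k+1)! := by
    have := Nat.factorial_mul_pow_le_factorial (m := 1) (n := k)
    simpa [Nat.add_comm] using this
  have h2 : ((2:ℝ))^k ≤ ((k+1)! : ℝ) := by exact_mod_cast h1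
  have h3 : ((n ! : ℝ) / (k + 1)!) ≤ (n ! : ℝ) / (2:ℝ)^k := by
    apply div_le_div_of_nonneg_left (by positivity) (by positivity) h2
  calc ((n ! : ℝ) / (k + 1)!) ^ 2 ≤ ((n ! : ℝ) / (2:ℝ)^k)^2 :=
        pow_le_pow_left₀ (by positivity) h3 2
    _ = ((n ! : ℝ))^2 * ((1/4:ℝ))^k := by
        rw [div_pow, div_eq_mul_inv, ← pow_mul]
        congr 1
        rw [one_div, inv_pow]
        congr 1
        rw [mul_comm k 2, pow_mul]; norm_num

lemma keyZ (n k : ℕ) (hk : k + 1 ≤ n) : sin (π * (n ! : ℝ) / (k + 1)!) = 0 := by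
  have hdvd : (k+1)! ∣ n ! := Nat.factorial_dvd_factorial hk
  have hne : ((k+1)! : ℝ) ≠ 0 := by positivity
  have hcast : ((n ! / (k+1)! : ℕ) : ℝ) = (n ! : ℝ) / ((k+1)! : ℝ) :=
    Nat.cast_div hdvd hne
  have : π * (n ! : ℝ) / (k + 1)! = ((n ! / (k+1)! : ℕ) : ℝ) * π := by
    rw [hcast]; ring
  rw [this, Real.sin_nat_mul_pi]

/-- For n ≥ 1, ∑_{k ≥ n+1} (n!/k!)² < 1/(n(n+2)); consequently if
    S_n = 4∑_{k≥1} ξ_k² sin²(π n!/k!) with 0 < ξ_k ≤ ξ₁ then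
    S_n ≤ 4π²ξ₁²/(n(n+2)) and S_n → 0.  Here `ξ k` denotes ξ_{k+1}. -/
theorem stmt_9 (ξ : ℕ → ℝ) (hpos : ∀ k, 0 < ξ k) (hbd : ∀ k, ξ k ≤ ξ 0)
    (S : ℕ → ℝ)
    (hS : ∀ n, S n = 4 * ∑' k : ℕ, (ξ k) ^ 2 * sin (π * (n ! : ℝ) / (k + 1)!) ^ 2) :
    (∀ n : ℕ, 1 ≤ n →
      ∑' k : ℕ, ((n ! : ℝ) / (n + 1 + k)!) ^ 2 < 1 / (n * (n + 2))) ∧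
    (∀ n : ℕ, 1 ≤ n → S n ≤ 4 * π ^ 2 * (ξ 0) ^ 2 / (n * (n + 2))) ∧
    Filter.Tendsto S Filter.atTop (nhds 0) := by
  have hpart2 : ∀ n : ℕ, 1 ≤ n → S n ≤ 4 * π ^ 2 * (ξ 0) ^ 2 / (n * (n + 2)) := by
    intro n hn
    set g := fun k : ℕ => (ξ k) ^ 2 * sin (π * (n ! : ℝ) / (k + 1)!) ^ 2 with hgdef
    have hb : ∀ k, g k ≤ (π^2 * (ξ 0)^2) * ((n ! : ℝ)/(k+1)!)^2 := by
      intro k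
      have h1 : sin (π * (n ! : ℝ)/(k+1)!)^2 ≤ (π * (n ! : ℝ)/(k+1)!)^2 :=
        Real.sin_sq_le_sq
      have h2 : (ξ k)^2 ≤ (ξ 0)^2 := pow_le_pow_left₀ (hpos k).le (hbd k) 2
      calc g k ≤ (ξ 0)^2 * (π * (n ! : ℝ)/(k+1)!)^2 :=
            mul_le_mul h2 h1 (by positivity) (by positivity)
        _ = (π^2 * (ξ 0)^2) * ((n ! : ℝ)/(k+1)!)^2 := by
            rw [mul_div_assoc, mul_pow]; ring
    have hH : Summable (fun k : ℕ => (π^2 * (ξ 0)^2) * ((n ! : ℝ)/(k+1)!)^2) :=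
      (keyT n).mul_left _
    have hgsum : Summable g :=
      Summable.of_nonneg_of_le (fun k => by positivity) hb hH
    have hsplit := Summable.sum_add_tsum_nat_add n hgsum
    have hzero : ∑ i ∈ Finset.range n, g i = 0 :=
      Finset.sum_eq_zero (fun i hi => by
        have hi' : i + 1 ≤ n := Finset.mem_range.1 hi
        simp [hgdef, keyZ n i hi'])
    have hshift : ∀ i : ℕ, g (i + n) ≤ (π^2 * (ξ 0)^2) * ((n ! : ℝ)/(n+1+i)!)^2 := by
      intro i
      have h := hb (i + n)
      have he : (i + n + 1) = (n + 1 + i) := by omega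
      rwa [he] at h
    have hSsum : Summable (fun i => g (i + n)) := (summable_nat_add_iff n).2 hgsum
    have hTsum : Summable (fun i : ℕ => (π^2 * (ξ 0)^2) * ((n ! : ℝ)/(n+1+i)!)^2) :=
      (keyS n hn).mul_left _
    have hle2 : ∑' i : ℕ, g (i+n) ≤ (π^2 * (ξ 0)^2) * ∑' i : ℕ, ((n ! : ℝ)/(n+1+i)!)^2 := by
      rw [← tsum_mul_left]; exact Summable.tsum_le_tsum hshift hSsum hTsum
    have hlast : (π^2 * (ξ 0)^2) * ∑' i : ℕ, ((n ! : ℝ)/(n+1+i)!)^2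
        ≤ (π^2 * (ξ 0)^2) * (1/((n:ℝ)*((n:ℝ)+2))) :=
      mul_le_mul_of_nonneg_left (key2 n hn).le (by positivity)
    have htsum_eq : ∑' k : ℕ, g k = ∑' i : ℕ, g (i + n) := by
      rw [← hsplit, hzero, zero_add]
    rw [hS n]
    show 4 * ∑' k : ℕ, g k ≤ _
    rw [htsum_eq]
    calc 4 * ∑' i : ℕ, g (i + n) ≤ 4 * ((π^2 * (ξ 0)^2) * (1/((n:ℝ)*((n:ℝ)+2)))) := by
          have := le_trans hle2 hlast
          linarith
      _ = 4 * π ^ 2 * (ξ 0) ^ 2 / ((n:ℝ) * ((n:ℝ) + 2)) := by ring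
  refine ⟨fun n hn => key2 n hn, hpart2, ?_⟩
  have hnonneg : ∀ n, 0 ≤ S n := by
    intro n
    rw [hS n]
    have : 0 ≤ ∑' k : ℕ, (ξ k) ^ 2 * sin (π * (n ! : ℝ) / (k + 1)!) ^ 2 :=
      tsum_nonneg (fun k => by positivity)
    linarith
  have htend : Filter.Tendsto (fun n : ℕ => 4 * π ^ 2 * (ξ 0) ^ 2 / ((n:ℝ) * ((n:ℝ) + 2)))
      Filter.atTop (nhds 0) := by
    apply Filter.Tendsto.div_atTop (tendsto_const_nhds)
    apply Filter.Tendsto.atTop_mul_atTop₀ tendsto_natCast_atTop_atTop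
    exact Filter.tendsto_atTop_add_const_right _ 2 tendsto_natCast_atTop_atTop
  apply squeeze_zero' (Filter.Eventually.of_forall hnonneg) ?_ htend
  filter_upwards [Filter.eventually_ge_atTop 1] with n hn
  exact hpart2 n hn
end

section
/- Let (ξ_k) be a positive decreasing real sequence and define the operator 𝐑 on ℓ² (viewed as a subset of the countable product of planes ℝ²) acting coordinatewise by x_k ↦ L_{2π/k!} x_k + ξ_k(1 − cos(2π/k!), −sin(2π/k!)). Then ‖𝐑ⁿ 0‖² = 4∑_{k≥1} ξ_k² sin²(π n/k!) for every n ∈ ℕ, and ‖𝐑^{n!} 0‖ ≤ 2πξ₁/√(n(n+2)) → 0 as n → ∞. -/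
open Real Nat
open scoped ENNReal

/-- Edelstein's operator 𝐑 acts coordinatewise on the countable product of planes;
    here `F` is that coordinatewise action, `ξ k` denotes ξ_{k+1}, and ℓ² is
    `lp (fun _ : ℕ => EuclideanSpace ℝ (Fin 2)) 2`.  The orbit of 0 stays in ℓ², its
    ℓ²-norm squared is 4∑_{k≥1} ξ_k² sin²(πn/k!), the suborbit indexed by factorials
    satisfies ‖𝐑^{n!} 0‖ ≤ 2πξ₁/√(n(n+2)), and hence tends to 0. -/
theorem stmt_10 (ξ : ℕ → ℝ) (hpos : ∀ k, 0 < ξ k) (hdec : ∀ k, ξ (k + 1) ≤ ξ k)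
    (F : (ℕ → EuclideanSpace ℝ (Fin 2)) → ℕ → EuclideanSpace ℝ (Fin 2))
    (hF : ∀ x k, F x k = mulVecE (L (2 * π / (k + 1)!)) (x k)
        + ξ k • toE ![1 - Real.cos (2 * π / (k + 1)!), -Real.sin (2 * π / (k + 1)!)]) :
    (∀ n : ℕ, Memℓp (F^[n] 0) 2) ∧
    (∀ (n : ℕ) (h : Memℓp (F^[n] 0) 2),
      ‖(⟨F^[n] 0, h⟩ : lp (fun _ : ℕ => EuclideanSpace ℝ (Fin 2)) 2)‖ ^ 2
        = 4 * ∑' k : ℕ, (ξ k) ^ 2 * Real.sin (π * n / (k + 1)!) ^ 2) ∧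
    (∀ n : ℕ, 1 ≤ n → ∀ h : Memℓp (F^[n !] 0) 2,
      ‖(⟨F^[n !] 0, h⟩ : lp (fun _ : ℕ => EuclideanSpace ℝ (Fin 2)) 2)‖
        ≤ 2 * π * ξ 0 / Real.sqrt (n * (n + 2))) ∧
    Filter.Tendsto
      (fun n : ℕ => 4 * ∑' k : ℕ, (ξ k) ^ 2 * Real.sin (π * (n ! : ℝ) / (k + 1)!) ^ 2)
      Filter.atTop (nhds 0) := by
  have hξ0 : ∀ k, ξ k ≤ ξ 0 := fun k => antitone_nat_of_succ_le hdec (Nat.zero_le k)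
  -- the explicit formula for the orbit
  have hiter : ∀ n k, F^[n] 0 k = toE ![ξ k * (1 - Real.cos (n * (2 * π / (k + 1)!))),
      -(ξ k * Real.sin (n * (2 * π / (k + 1)!)))] := by
    intro n
    induction n with
    | zero =>
      intro k
      simp only [Function.iterate_zero, id_eq]
      ext i
      fin_cases i <;> simp [toE]
    | succ n ih =>
      intro k
      rw [Function.iterate_succ_apply', hF, ih]
      ext i
      fin_cases i <;>
        simp [toE, mulVecE, L, Matrix.mulVec, dotProduct, Fin.sum_univ_two,
          PiLp.add_apply, PiLp.smul_apply, smul_eq_mul] <;>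
        rw [show ((n : ℝ) + 1) * (2 * π / (k + 1)!) = n * (2 * π / (k + 1)!) + 2 * π / (k + 1)! by
          ring] <;>
        simp [Real.cos_add, Real.sin_add] <;> ring
  -- the pointwise norm
  have hnorm : ∀ n k, ‖F^[n] 0 k‖ ^ 2 = 4 * (ξ k ^ 2 * Real.sin (π * n / (k + 1)!) ^ 2) := by
    intro n k
    rw [hiter n k, EuclideanSpace.norm_eq, Real.sq_sqrt (by positivity)]
    set a := π * (n : ℝ) / (k + 1)! with ha
    have h2a : (n : ℝ) * (2 * π / (k + 1)!) = 2 * a := by rw [ha]; ring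
    rw [h2a]
    simp only [toE, Fin.sum_univ_two, Matrix.cons_val_zero, Matrix.cons_val_one, Matrix.head_cons,
      Real.norm_eq_abs, sq_abs]
    rw [Real.cos_two_mul, Real.cos_sq', Real.sin_two_mul]
    linear_combination (4 * ξ k ^ 2 * Real.sin a ^ 2) * Real.sin_sq_add_cos_sq a
  -- summability of the squared norms
  have hsummable : ∀ n : ℕ,
      Summable (fun k : ℕ => 4 * (ξ k ^ 2 * Real.sin (π * n / (k + 1)!) ^ 2)) := by
    intro n
    have hC : Summable (fun k : ℕ => (4 * ξ 0 ^ 2 * (π * n) ^ 2) * (1 / k !)) := by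
      simpa using (Real.summable_pow_div_factorial 1).mul_left (4 * ξ 0 ^ 2 * (π * n) ^ 2)
    refine hC.of_nonneg_of_le (fun k => by positivity) (fun k => ?_)
    have hfac : (k ! : ℝ) ≤ ((k + 1)! : ℝ) ^ 2 := by
      calc (k ! : ℝ) ≤ ((k+1)! : ℝ) := by exact_mod_cast Nat.factorial_le (Nat.le_succ k)
      _ ≤ ((k+1)! : ℝ) ^ 2 := by
          nlinarith [(Nat.one_le_cast (α := ℝ)).2 (k+1).factorial_pos]
    have hfp : (0:ℝ) < (k ! : ℝ) := by exact_mod_cast k.factorial_pos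
    have hsin : Real.sin (π * n / (k + 1)!) ^ 2 ≤ (π * n) ^ 2 / (k !) := by
      calc Real.sin (π * n / (k + 1)!) ^ 2 ≤ (π * n / (k + 1)!) ^ 2 := Real.sin_sq_le_sq
      _ = (π * n) ^ 2 / ((k+1)! : ℝ) ^ 2 := by ring
      _ ≤ (π * n) ^ 2 / (k !) := by
          apply div_le_div_of_nonneg_left (by positivity) hfp hfac
    have hξ : ξ k ^ 2 ≤ ξ 0 ^ 2 := by nlinarith [hpos k, hξ0 k]
    have h1 : (0:ℝ) ≤ Real.sin (π * n / (k + 1)!) ^ 2 := by positivity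
    calc 4 * (ξ k ^ 2 * Real.sin (π * n / (k + 1)!) ^ 2)
        ≤ 4 * (ξ 0 ^ 2 * ((π * n) ^ 2 / (k !))) := by
          have := (hpos k).le
          gcongr
    _ = (4 * ξ 0 ^ 2 * (π * n) ^ 2) * (1 / k !) := by ring
  have hsum' : ∀ n : ℕ,
      Summable (fun k : ℕ => ξ k ^ 2 * Real.sin (π * n / (k + 1)!) ^ 2) := by
    intro n
    exact ((hsummable n).mul_left (1 / 4)).congr fun k => by ring
  -- membership in ℓ²
  have hmem : ∀ n : ℕ, Memℓp (F^[n] 0) 2 := by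
    intro n
    apply memℓp_gen
    have h2 : ((2 : ℝ≥0∞)).toReal = ((2 : ℕ) : ℝ) := by norm_num
    simp only [h2, Real.rpow_natCast]
    exact (hsummable n).congr fun k => (hnorm n k).symm
  -- the norm-squared formula
  have hnormsq : ∀ (n : ℕ) (h : Memℓp (F^[n] 0) 2),
      ‖(⟨F^[n] 0, h⟩ : lp (fun _ : ℕ => EuclideanSpace ℝ (Fin 2)) 2)‖ ^ 2
        = 4 * ∑' k : ℕ, (ξ k) ^ 2 * Real.sin (π * n / (k + 1)!) ^ 2 := by
    intro n h
    have key := lp.norm_rpow_eq_tsum (p := 2) (by norm_num)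
      (⟨F^[n] 0, h⟩ : lp (fun _ : ℕ => EuclideanSpace ℝ (Fin 2)) 2)
    have h2 : ((2 : ℝ≥0∞)).toReal = ((2 : ℕ) : ℝ) := by norm_num
    simp only [h2, Real.rpow_natCast] at key
    rw [key]
    rw [tsum_congr (fun k => hnorm n k), tsum_mul_left]
  -- the key tail estimate at factorial times
  have hbound : ∀ n : ℕ, 1 ≤ n →
      ∑' k : ℕ, ξ k ^ 2 * Real.sin (π * (n ! : ℝ) / (k + 1)!) ^ 2
        ≤ ξ 0 ^ 2 * π ^ 2 / (n * (n + 2)) := by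
    intro n hn
    have hsum := hsum' (n !)
    set f : ℕ → ℝ := fun k => ξ k ^ 2 * Real.sin (π * (n ! : ℝ) / (k + 1)!) ^ 2 with hf
    have hzero : ∀ k < n, f k = 0 := by
      intro k hk
      have hdvd : (k + 1)! ∣ n ! := Nat.factorial_dvd_factorial hk
      have hne : ((k + 1)! : ℝ) ≠ 0 := by exact_mod_cast (k + 1).factorial_pos.ne'
      have hcast : (n ! : ℝ) / ((k + 1)! : ℝ) = ((n ! / (k + 1)! : ℕ) : ℝ) :=
        (Nat.cast_div hdvd hne).symm
      have : π * (n ! : ℝ) / ((k + 1)! : ℝ) = ((n ! / (k + 1)! : ℕ) : ℝ) * π := by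
        rw [mul_div_assoc, hcast, mul_comm]
      simp [hf, this, Real.sin_nat_mul_pi]
    have hsplit := (Summable.sum_add_tsum_nat_add n hsum).symm
    have hfin : ∑ k ∈ Finset.range n, f k = 0 :=
      Finset.sum_eq_zero fun k hk => hzero k (Finset.mem_range.1 hk)
    rw [hsplit, hfin, zero_add]
    have hr1 : (0:ℝ) < (n:ℝ) + 1 := by positivity
    set r : ℝ := (1 / ((n:ℝ) + 1)) ^ 2 with hrdef
    have hr0 : 0 ≤ r := by positivity
    have hrlt : r < 1 := by
      rw [hrdef]
      have : (1 / ((n:ℝ) + 1)) < 1 := by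
        rw [div_lt_one hr1]; exact_mod_cast by omega
      nlinarith [this, (by positivity : (0:ℝ) ≤ 1 / ((n:ℝ)+1))]
    have hterm : ∀ j : ℕ, f (j + n) ≤ (ξ 0 ^ 2 * π ^ 2) * r ^ (j + 1) := by
      intro j
      have hfac : (n ! : ℝ) * ((n:ℝ) + 1) ^ (j + 1) ≤ ((j + n + 1)! : ℝ) := by
        have := Nat.factorial_mul_pow_le_factorial (m := n) (n := j + 1)
        have h2 : n + (j + 1) = j + n + 1 := by omega
        rw [h2] at this
        exact_mod_cast this
      have hfp : (0:ℝ) < ((j + n + 1)! : ℝ) := by exact_mod_cast (j + n + 1).factorial_pos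
      have hdivle : (n ! : ℝ) / ((j + n + 1)! : ℝ) ≤ (1 / ((n:ℝ) + 1)) ^ (j + 1) := by
        have hpow : (0:ℝ) < ((n:ℝ) + 1) ^ (j + 1) := by positivity
        rw [div_le_iff₀ hfp, div_pow, one_pow, div_mul_eq_mul_div, le_div_iff₀ hpow, one_mul]
        exact hfac
      have hsq : Real.sin (π * (n ! : ℝ) / ((j + n + 1)! : ℝ)) ^ 2
          ≤ π ^ 2 * ((1 / ((n:ℝ) + 1)) ^ (j + 1)) ^ 2 := by
        calc Real.sin (π * (n ! : ℝ) / ((j + n + 1)! : ℝ)) ^ 2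
            ≤ (π * (n ! : ℝ) / ((j + n + 1)! : ℝ)) ^ 2 := Real.sin_sq_le_sq
          _ = π ^ 2 * ((n ! : ℝ) / ((j + n + 1)! : ℝ)) ^ 2 := by ring
          _ ≤ π ^ 2 * ((1 / ((n:ℝ) + 1)) ^ (j + 1)) ^ 2 := by
              gcongr
      have hξ : ξ (j + n) ^ 2 ≤ ξ 0 ^ 2 := by nlinarith [hpos (j + n), hξ0 (j + n)]
      have h0s : (0:ℝ) ≤ Real.sin (π * (n ! : ℝ) / ((j + n + 1)! : ℝ)) ^ 2 := by positivity
      have : f (j + n) = ξ (j + n) ^ 2 * Real.sin (π * (n ! : ℝ) / ((j + n + 1)! : ℝ)) ^ 2 := by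
        simp only [hf]
      rw [this, hrdef]
      calc ξ (j + n) ^ 2 * Real.sin (π * (n ! : ℝ) / ((j + n + 1)! : ℝ)) ^ 2
          ≤ ξ 0 ^ 2 * (π ^ 2 * ((1 / ((n:ℝ) + 1)) ^ (j + 1)) ^ 2) :=
            mul_le_mul hξ hsq h0s (by positivity)
        _ = (ξ 0 ^ 2 * π ^ 2) * ((1 / ((n:ℝ) + 1)) ^ 2) ^ (j + 1) := by
            rw [← pow_mul, ← pow_mul]; ring_nf
    have hgeo : Summable (fun j : ℕ => (ξ 0 ^ 2 * π ^ 2) * r ^ (j + 1)) := by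
      apply Summable.mul_left
      exact (summable_geometric_of_lt_one hr0 hrlt).comp_injective (add_left_injective 1)
    have htail : ∑' j : ℕ, f (j + n) ≤ ∑' j : ℕ, (ξ 0 ^ 2 * π ^ 2) * r ^ (j + 1) := by
      apply Summable.tsum_le_tsum hterm _ hgeo
      exact (summable_nat_add_iff n).2 hsum
    refine htail.trans ?_
    have hsum2 : ∑' j : ℕ, (ξ 0 ^ 2 * π ^ 2) * r ^ (j + 1)
        = (ξ 0 ^ 2 * π ^ 2) * (r * (1 - r)⁻¹) := by
      rw [tsum_mul_left]
      congr 1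
      have : ∀ j : ℕ, r ^ (j + 1) = r * r ^ j := fun j => by rw [pow_succ]; ring
      simp_rw [this]
      rw [tsum_mul_left, tsum_geometric_of_lt_one hr0 hrlt]
    rw [hsum2]
    have hnn : (0:ℝ) < (n:ℝ) * ((n:ℝ) + 2) := by
      have : (1:ℝ) ≤ (n:ℝ) := by exact_mod_cast hn
      nlinarith
    have h1r : 1 - r = ((n:ℝ) * ((n:ℝ) + 2)) / (((n:ℝ) + 1) ^ 2) := by
      rw [hrdef]
      field_simp
      ring
    have hval : r * (1 - r)⁻¹ = ((n:ℝ) * ((n:ℝ) + 2))⁻¹ := by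
      rw [h1r, hrdef]
      field_simp
    rw [hval, div_eq_mul_inv]
  refine ⟨hmem, hnormsq, ?_, ?_⟩
  · -- the factorial suborbit estimate
    intro n hn h
    have hnn : (0:ℝ) < (n:ℝ) * ((n:ℝ) + 2) := by
      have : (1:ℝ) ≤ (n:ℝ) := by exact_mod_cast hn
      nlinarith
    have hRHS0 : (0:ℝ) ≤ 2 * π * ξ 0 / Real.sqrt ((n:ℝ) * ((n:ℝ) + 2)) := by
      have := (hpos 0).le
      have := Real.pi_pos.le
      positivity
    have hrh : (2 * π * ξ 0 / Real.sqrt ((n:ℝ) * ((n:ℝ) + 2))) ^ 2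
        = 4 * (ξ 0 ^ 2 * π ^ 2 / ((n:ℝ) * ((n:ℝ) + 2))) := by
      rw [div_pow, Real.sq_sqrt hnn.le]
      ring
    have h1 : ‖(⟨F^[n !] 0, h⟩ : lp (fun _ : ℕ => EuclideanSpace ℝ (Fin 2)) 2)‖ ^ 2
        ≤ (2 * π * ξ 0 / Real.sqrt ((n:ℝ) * ((n:ℝ) + 2))) ^ 2 := by
      rw [hnormsq (n !) h, hrh]
      have := hbound n hn
      linarith
    have h2 := Real.sqrt_le_sqrt h1
    rwa [Real.sqrt_sq (norm_nonneg _), Real.sqrt_sq hRHS0] at h2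
  · -- convergence to zero
    have hlim : Filter.Tendsto (fun n : ℕ => (n:ℝ) * ((n:ℝ) + 2)) Filter.atTop Filter.atTop :=
      tendsto_natCast_atTop_atTop.atTop_mul_atTop₀
        (Filter.tendsto_atTop_add_const_right _ 2 tendsto_natCast_atTop_atTop)
    have hupper : Filter.Tendsto
        (fun n : ℕ => (4 * (ξ 0 ^ 2 * π ^ 2)) / ((n:ℝ) * ((n:ℝ) + 2)))
        Filter.atTop (nhds 0) :=
      Filter.Tendsto.div_atTop tendsto_const_nhds hlim
    apply squeeze_zero' ?_ ?_ hupper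
    · filter_upwards with n
      have : (0:ℝ) ≤ ∑' k : ℕ, (ξ k) ^ 2 * Real.sin (π * (n ! : ℝ) / (k + 1)!) ^ 2 :=
        tsum_nonneg fun k => by positivity
      linarith
    · filter_upwards [Filter.eventually_ge_atTop 1] with n hn
      have := hbound n hn
      calc 4 * ∑' k : ℕ, (ξ k) ^ 2 * Real.sin (π * (n ! : ℝ) / (k + 1)!) ^ 2
          ≤ 4 * (ξ 0 ^ 2 * π ^ 2 / ((n:ℝ) * ((n:ℝ) + 2))) := by linarith
        _ = (4 * (ξ 0 ^ 2 * π ^ 2)) / ((n:ℝ) * ((n:ℝ) + 2)) := by ring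
end

section
/- Define the real sequence x_n := 4∑_{k≥1} sin²(π n/k!) (which is finite for each n). Then x_{n!} → 0 as n → ∞, with x_{n!} ≤ 4π²/(n(n+2)) for all n ≥ 1. -/
open Real Nat

lemma fact_pow_le (n k : ℕ) : n ! * (n + 1) ^ (k + 1) ≤ (n + (k + 1))! := by
  induction k with
  | zero => simp [Nat.factorial_succ, Nat.mul_comm]
  | succ k ih =>
    have : n ! * (n + 1) ^ (k + 1 + 1) = (n ! * (n + 1) ^ (k + 1)) * (n + 1) := by ring
    rw [this]
    calc n ! * (n + 1) ^ (k + 1) * (n + 1) ≤ (n + (k + 1))! * (n + 1) :=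
        Nat.mul_le_mul_right _ ih
      _ ≤ (n + (k + 1))! * (n + (k + 1) + 1) := by
        exact Nat.mul_le_mul_left _ (by omega)
      _ = (n + (k + 2))! := by
        rw [show n + (k + 2) = (n + (k + 1)) + 1 by ring, Nat.factorial_succ]
        ring

/-- For x_n := 4∑_{k≥1} sin²(π n/k!), one has x_{n!} → 0, with
    x_{n!} ≤ 4π²/(n(n+2)) for n ≥ 1. -/
theorem stmt_11 (x : ℕ → ℝ)
    (hx : ∀ n, x n = 4 * ∑' k : ℕ, sin (π * n / (k + 1)!) ^ 2) :
    Filter.Tendsto (fun n : ℕ => x (n !)) Filter.atTop (nhds 0) ∧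
    ∀ n : ℕ, 1 ≤ n → x (n !) ≤ 4 * π ^ 2 / (n * (n + 2)) := by
  have hxnn : ∀ n, 0 ≤ x n := by
    intro n
    rw [hx]
    have : 0 ≤ ∑' k : ℕ, sin (π * n / (k + 1)!) ^ 2 :=
      tsum_nonneg fun k => sq_nonneg _
    linarith
  have key : ∀ n : ℕ, 1 ≤ n → x (n !) ≤ 4 * π ^ 2 / (n * (n + 2)) := by
    intro n hn
    rw [hx]
    set f : ℕ → ℝ := fun k => sin (π * (n ! : ℕ) / (k + 1)!) ^ 2 with hf
    set r : ℝ := (1 / ((n : ℝ) + 1)) ^ 2 with hr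
    have hn1 : (1 : ℝ) < (n : ℝ) + 1 := by
      have : (1 : ℝ) ≤ (n : ℝ) := by exact_mod_cast hn
      linarith
    have hr0 : 0 ≤ r := by positivity
    have hr1 : r < 1 := by
      rw [hr]
      have h1 : 1 / ((n : ℝ) + 1) < 1 := by
        rw [div_lt_one (by linarith)]; linarith
      have h0 : 0 ≤ 1 / ((n : ℝ) + 1) := by positivity
      calc (1 / ((n : ℝ) + 1)) ^ 2 ≤ 1 / ((n:ℝ)+1) := by
            nlinarith
        _ < 1 := h1
    -- vanishing terms
    have hfz : ∀ k ∈ Finset.range n, f k = 0 := by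
      intro k hk
      have hk' : k + 1 ≤ n := Finset.mem_range.mp hk
      obtain ⟨m, hm⟩ := Nat.factorial_dvd_factorial hk'
      have hne : ((k + 1)! : ℝ) ≠ 0 := by positivity
      have : π * (n ! : ℕ) / (k + 1)! = (m : ℝ) * π := by
        rw [hm]
        push_cast
        field_simp
      simp [hf, this, Real.sin_nat_mul_pi]
    -- bound for shifted terms
    have hfle : ∀ k : ℕ, f (k + n) ≤ π ^ 2 * r ^ (k + 1) := by
      intro k
      have h1 : sin (π * (n ! : ℕ) / (k + n + 1)!) ^ 2 ≤
          (π * (n ! : ℕ) / (k + n + 1)!) ^ 2 := Real.sin_sq_le_sq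
      have h2 : ((n !  : ℕ) : ℝ) / ((k + n + 1)! : ℕ) ≤ (1 / ((n : ℝ) + 1)) ^ (k + 1) := by
        rw [div_pow, one_pow, div_le_div_iff₀ (by positivity) (by positivity), one_mul,
          show k + n + 1 = n + (k + 1) by ring]
        exact_mod_cast fact_pow_le n k
      have h3 : (π * (n ! : ℕ) / (k + n + 1)!) ^ 2 ≤ π ^ 2 * r ^ (k + 1) := by
        have hnn : 0 ≤ ((n ! : ℕ) : ℝ) / ((k + n + 1)! : ℕ) := by positivity
        have : (π * (n ! : ℕ) / (k + n + 1)!) = π * (((n ! : ℕ) : ℝ) / ((k + n + 1)! : ℕ)) := by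
          ring
        rw [this, mul_pow, hr, ← pow_mul, pow_mul']
        exact mul_le_mul_of_nonneg_left (pow_le_pow_left₀ hnn h2 2) (sq_nonneg π)
      calc f (k + n) = sin (π * (n ! : ℕ) / (k + n + 1)!) ^ 2 := by
            simp [hf]
        _ ≤ (π * (n ! : ℕ) / (k + n + 1)!) ^ 2 := h1
        _ ≤ π ^ 2 * r ^ (k + 1) := h3
    -- summability of geometric bound
    have hg : Summable (fun k : ℕ => π ^ 2 * r ^ (k + 1)) := by
      have := (summable_geometric_of_lt_one hr0 hr1).mul_left (π ^ 2 * r)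
      exact this.congr fun k => by ring
    have hgsum : ∑' k : ℕ, π ^ 2 * r ^ (k + 1) = π ^ 2 * (r * (1 - r)⁻¹) := by
      have h1 : ∑' k : ℕ, π ^ 2 * r ^ (k + 1) = (π ^ 2 * r) * ∑' k : ℕ, r ^ k := by
        rw [← tsum_mul_left]
        congr 1 with k
        ring
      rw [h1, tsum_geometric_of_lt_one hr0 hr1]
      ring
    -- summability of f (shifted)
    have hfs : Summable (fun k : ℕ => f (k + n)) :=
      Summable.of_nonneg_of_le (fun k => sq_nonneg _) hfle hg
    have hsplit : ∑' k : ℕ, f k = ∑' k : ℕ, f (k + n) := by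
      rw [← Summable.sum_add_tsum_nat_add' hfs, Finset.sum_eq_zero hfz, zero_add]
    have hle : ∑' k : ℕ, f k ≤ π ^ 2 * (r * (1 - r)⁻¹) := by
      rw [hsplit, ← hgsum]
      exact Summable.tsum_le_tsum hfle hfs hg
    have hnpos : (0:ℝ) < (n:ℝ) := by
      have : (1:ℝ) ≤ (n:ℝ) := by exact_mod_cast hn
      linarith
    have h1r : (1 : ℝ) - r ≠ 0 := by linarith
    have harith : π ^ 2 * (r * (1 - r)⁻¹) = π ^ 2 / ((n : ℝ) * ((n:ℝ) + 2)) := by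
      rw [hr] at h1r ⊢
      have hne1 : (n : ℝ) + 1 ≠ 0 := by positivity
      have hd : (n:ℝ) * 2 + (n:ℝ) ^ 2 ≠ 0 := ne_of_gt (by nlinarith)
      field_simp
      rw [div_eq_iff (show ((n:ℝ) + 1) ^ 2 - 1 ≠ 0 from ne_of_gt (by nlinarith))]
      ring
    calc 4 * ∑' k : ℕ, f k ≤ 4 * (π ^ 2 * (r * (1 - r)⁻¹)) := by linarith
      _ = 4 * π ^ 2 / ((n:ℝ) * ((n:ℝ) + 2)) := by rw [harith]; ring
  refine ⟨?_, key⟩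
  have hg0 : Filter.Tendsto (fun n : ℕ => 4 * π ^ 2 / ((n:ℝ) * ((n:ℝ) + 2)))
      Filter.atTop (nhds 0) := by
    apply Filter.Tendsto.div_atTop tendsto_const_nhds
    apply Filter.Tendsto.atTop_mul_atTop₀ tendsto_natCast_atTop_atTop
    exact Filter.tendsto_atTop_add_const_right _ 2 tendsto_natCast_atTop_atTop
  apply squeeze_zero' (Filter.Eventually.of_forall fun n => hxnn _) ?_ hg0
  filter_upwards [Filter.eventually_ge_atTop 1] with n hn
  exact key n hn
end

section
/- Define s_n := 1 + ∑_{m=1}^{n−1} ⌈m/2⌉·(m+2)! for n ≥ 1. Then for all integers k with 4 ≤ k ≤ n + 2, the fractional part of s_n/k! is at least 1/2 − 3/(2k). -/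
open Real Nat

/-- s_n = 1 + ∑_{m=1}^{n-1} ⌈m/2⌉·(m+2)! . -/
noncomputable def s (n : ℕ) : ℤ :=
  1 + ∑ m ∈ Finset.Icc 1 (n - 1), ⌈(m : ℚ) / 2⌉ * ((m + 2)! : ℤ)

lemma two_ceil_ge (m : ℕ) : (m : ℤ) ≤ 2 * ⌈(m : ℚ) / 2⌉ := by
  have h : ((m : ℚ)) / 2 ≤ (⌈(m : ℚ) / 2⌉ : ℚ) := Int.le_ceil _
  have h2 : ((m : ℤ) : ℚ) ≤ ((2 * ⌈(m : ℚ) / 2⌉ : ℤ) : ℚ) := by push_cast; linarith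
  exact_mod_cast h2

lemma ceil_le_self (m : ℕ) : ⌈(m : ℚ) / 2⌉ ≤ (m : ℤ) := by
  apply Int.ceil_le.mpr
  push_cast
  have : (0:ℚ) ≤ m := by positivity
  linarith

lemma s_succ (j : ℕ) : s (j + 3) = s (j + 2) +
    ⌈((j + 2 : ℕ) : ℚ) / 2⌉ * ((j + 4)! : ℤ) := by
  unfold s
  rw [show j + 3 - 1 = (j + 1) + 1 from rfl,
    Finset.sum_Icc_succ_top (by omega : 1 ≤ (j + 1) + 1)]
  norm_num [show ((j : ℚ) + 1 + 1) = (j : ℚ) + 2 from by ring,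
    show j + 1 + 1 + 2 = j + 4 from by omega, add_assoc]

lemma s_bounds : ∀ j : ℕ, ((j : ℤ) + 1) * ((j + 3)! : ℤ) ≤ 2 * s (j + 2) ∧
    s (j + 2) < ((j + 4)! : ℤ) := by
  intro j
  induction j with
  | zero =>
    have : s 2 = 7 := by
      unfold s
      rw [show (2 : ℕ) - 1 = 1 from rfl, Finset.Icc_self, Finset.sum_singleton]
      have hc : ⌈((1 : ℕ) : ℚ) / 2⌉ = 1 := by
        rw [Int.ceil_eq_iff]
        norm_num
      rw [hc]
      norm_num [Nat.factorial]
    rw [this]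
    norm_num [Nat.factorial]
  | succ i ih =>
    obtain ⟨ih1, ih2⟩ := ih
    have hrec := s_succ i
    have hc1 := two_ceil_ge (i + 2)
    have hc2 := ceil_le_self (i + 2)
    have hf1 : ((i + 4)! : ℤ) = (i + 4) * ((i + 3)! : ℤ) := by
      push_cast [Nat.factorial_succ (i + 3)]; ring
    have hf2 : ((i + 5)! : ℤ) = (i + 5) * ((i + 4)! : ℤ) := by
      push_cast [Nat.factorial_succ (i + 4)]; ring
    have hpos : (0 : ℤ) < ((i + 3)! : ℤ) := by positivity
    have hpos2 : (0 : ℤ) < ((i + 4)! : ℤ) := by positivity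
    push_cast at hc1 hc2 ⊢
    rw [show i + 1 + 2 = i + 3 from rfl, show i + 1 + 3 = i + 4 from rfl,
      show i + 1 + 4 = i + 5 from rfl, hrec]
    push_cast
    constructor
    · nlinarith [hpos, hpos2]
    · nlinarith [hpos, hpos2]

theorem stmt_12 (n : ℕ) (hn : 1 ≤ n) :
    ∀ k : ℕ, 4 ≤ k → k ≤ n + 2 →
      1 / 2 - 3 / (2 * (k : ℝ)) ≤ Int.fract ((s n : ℝ) / (k ! : ℝ)) := by
  intro k hk4 hkn
  obtain ⟨j, rfl⟩ : ∃ j, k = j + 4 := ⟨k - 4, by omega⟩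
  have hjn : j + 1 ≤ n - 1 := by omega
  -- split the sum
  have hsplit : s n = s (j + 2) +
      ∑ m ∈ Finset.Ioc (j + 1) (n - 1), ⌈(m : ℚ) / 2⌉ * ((m + 2)! : ℤ) := by
    unfold s
    rw [show j + 2 - 1 = j + 1 from rfl]
    have e : ∀ x : ℕ, Finset.Icc 1 x = Finset.Ioc 0 x := by
      intro x; ext a; simp; omega
    rw [e, e, add_assoc, ← Finset.sum_Ioc_consecutive _ (Nat.zero_le (j + 1)) hjn]
  have hdvd : ((j + 4)! : ℤ) ∣
      ∑ m ∈ Finset.Ioc (j + 1) (n - 1), ⌈(m : ℚ) / 2⌉ * ((m + 2)! : ℤ) := by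
    apply Finset.dvd_sum
    intro m hm
    have hm' : j + 2 ≤ m := (Finset.mem_Ioc.mp hm).1
    have : (j + 4)! ∣ (m + 2)! := Nat.factorial_dvd_factorial (by omega)
    exact Dvd.dvd.mul_left (Int.natCast_dvd_natCast.mpr this) _
  obtain ⟨d, hd⟩ := hdvd
  obtain ⟨hlb, hub⟩ := s_bounds j
  have hFpos : (0 : ℝ) < ((j + 4)! : ℝ) := by positivity
  have hF3pos : (0 : ℝ) < ((j + 3)! : ℝ) := by positivity
  have hSpos : (0 : ℤ) < s (j + 2) := by nlinarith [Nat.factorial_pos (j + 3)]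
  have key : ((s n : ℝ)) / ((j + 4)! : ℝ) =
      (s (j + 2) : ℝ) / ((j + 4)! : ℝ) + (d : ℝ) := by
    rw [hsplit, hd]
    push_cast
    field_simp
  rw [key, Int.fract_add_intCast]
  have hfract : Int.fract ((s (j + 2) : ℝ) / ((j + 4)! : ℝ)) =
      (s (j + 2) : ℝ) / ((j + 4)! : ℝ) := by
    apply Int.fract_eq_self.mpr
    constructor
    · positivity
    · rw [div_lt_one hFpos]
      exact_mod_cast hub
  rw [hfract]
  rw [le_div_iff₀ hFpos]
  have hf : ((j + 4)! : ℝ) = (j + 4) * ((j + 3)! : ℝ) := by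
    push_cast [Nat.factorial_succ (j + 3)]; ring
  have hlb' : ((j : ℝ) + 1) * ((j + 3)! : ℝ) ≤ 2 * (s (j + 2) : ℝ) := by
    exact_mod_cast hlb
  have hk : (0 : ℝ) < (j : ℝ) + 4 := by positivity
  push_cast
  rw [hf]
  have h3 : (3 : ℝ) / (2 * ((j : ℝ) + 4)) * (((j : ℝ) + 4) * ((j + 3)! : ℝ)) =
      3 / 2 * ((j + 3)! : ℝ) := by field_simp
  nlinarith [h3]
end

section
/- Let 0 < θ < 2π, ξ > 0, f = (ξ, 0), v = ξ(1 − cos θ, −sin θ), R x = L_θ x + v, and T = (Id + R)/2. Then for every x ∈ ℝ² and n ∈ ℕ, Tⁿ x = f + cosⁿ(θ/2)·L_{nθ/2}(x − f); hence ‖Tⁿ x − f‖ = cosⁿ(θ/2)·‖x − f‖ and Tⁿ x → f with linear rate cos(θ/2). -/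
open Real

lemma mulVecE_comp (a b : ℝ) (x : EuclideanSpace ℝ (Fin 2)) :
    mulVecE (L a) (mulVecE (L b) x) = mulVecE (L (a + b)) x := by
  ext i
  fin_cases i <;>
  · simp [mulVecE, L, Matrix.mulVec, dotProduct, Fin.sum_univ_two,
      Real.cos_add, Real.sin_add]
    ring

lemma norm_mulVecE (a : ℝ) (x : EuclideanSpace ℝ (Fin 2)) :
    ‖mulVecE (L a) x‖ = ‖x‖ := by
  have h := Real.sin_sq_add_cos_sq a
  simp only [EuclideanSpace.norm_eq, Fin.sum_univ_two]
  congr 1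
  simp [mulVecE, L, Matrix.mulVec, dotProduct, Fin.sum_univ_two]
  ring_nf
  nlinarith [Real.sin_sq_add_cos_sq a, sq_nonneg (x 0), sq_nonneg (x 1)]

theorem stmt_18 (θ ξ : ℝ) (hθ : 0 < θ) (hθ' : θ < 2 * π) (hξ : 0 < ξ)
    (f v : EuclideanSpace ℝ (Fin 2))
    (hf : f = toE ![ξ, 0]) (hv : v = ξ • toE ![1 - Real.cos θ, -Real.sin θ])
    (R T : EuclideanSpace ℝ (Fin 2) → EuclideanSpace ℝ (Fin 2))
    (hR : ∀ x, R x = mulVecE (L θ) x + v)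
    (hT : ∀ x, T x = (1 / 2 : ℝ) • x + (1 / 2 : ℝ) • R x) :
    ∀ (x : EuclideanSpace ℝ (Fin 2)),
      (∀ n : ℕ, T^[n] x = f + (Real.cos (θ / 2)) ^ n • mulVecE (L (n * θ / 2)) (x - f)) ∧
      (∀ n : ℕ, ‖T^[n] x - f‖ = |Real.cos (θ / 2)| ^ n * ‖x - f‖) ∧
      Filter.Tendsto (fun n : ℕ => T^[n] x) Filter.atTop (nhds f) := by
  -- key one-step formula
  have key : ∀ y : EuclideanSpace ℝ (Fin 2),
      T y = f + Real.cos (θ / 2) • mulVecE (L (θ / 2)) (y - f) := by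
    intro y
    rw [hT, hR]
    ext i
    have hc := Real.cos_two_mul (θ/2)
    have hs := Real.sin_two_mul (θ/2)
    rw [show 2*(θ/2) = θ by ring] at hc hs
    fin_cases i <;>
    · simp [hf, hv, mulVecE, L, toE, Matrix.mulVec, dotProduct, Fin.sum_univ_two, Matrix.vecHead, Matrix.vecTail]
      rw [hc, hs]; ring
  intro x
  have main : ∀ n : ℕ, T^[n] x = f + (Real.cos (θ / 2)) ^ n • mulVecE (L (n * θ / 2)) (x - f) := by
    intro n
    induction n with
    | zero =>
      ext i
      fin_cases i <;>
        simp [mulVecE, L, Matrix.mulVec, dotProduct, Fin.sum_univ_two]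
    | succ n ih =>
      rw [Function.iterate_succ_apply', ih, key]
      have : f + (Real.cos (θ/2)) ^ n • mulVecE (L (n * θ / 2)) (x - f) - f
          = (Real.cos (θ/2)) ^ n • mulVecE (L (n * θ / 2)) (x - f) := by
        abel
      rw [this]
      have hsm : mulVecE (L (θ/2)) ((Real.cos (θ/2)) ^ n • mulVecE (L (n * θ / 2)) (x - f))
          = (Real.cos (θ/2)) ^ n • mulVecE (L (θ/2 + n * θ / 2)) (x - f) := by
        rw [← mulVecE_comp]
        ext i
        fin_cases i <;>
        · simp [mulVecE, L, Matrix.mulVec, dotProduct, Fin.sum_univ_two]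
          ring
      rw [hsm, smul_smul, ← pow_succ']
      congr 2
      push_cast
      ring
  refine ⟨main, ?_, ?_⟩
  · intro n
    rw [main]
    have : f + (Real.cos (θ/2)) ^ n • mulVecE (L (n * θ / 2)) (x - f) - f
        = (Real.cos (θ/2)) ^ n • mulVecE (L (n * θ / 2)) (x - f) := by abel
    rw [this, norm_smul, norm_mulVecE]
    simp [abs_pow]
  · have habs : |Real.cos (θ/2)| < 1 := by
      have h1 : Real.cos (θ/2) < Real.cos 0 :=
        Real.cos_lt_cos_of_nonneg_of_le_pi le_rfl (by linarith) (by linarith)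
      have h2 : Real.cos π < Real.cos (θ/2) :=
        Real.cos_lt_cos_of_nonneg_of_le_pi (by linarith) le_rfl (by linarith)
      rw [Real.cos_zero] at h1
      rw [Real.cos_pi] at h2
      rw [abs_lt]
      exact ⟨by linarith, h1⟩
    have h0 : Filter.Tendsto (fun n : ℕ => |Real.cos (θ/2)| ^ n * ‖x - f‖) Filter.atTop (nhds 0) := by
      have := tendsto_pow_atTop_nhds_zero_of_lt_one (abs_nonneg _) habs
      simpa using this.mul_const ‖x - f‖
    rw [tendsto_iff_norm_sub_tendsto_zero]
    refine h0.congr fun n => ?_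
    rw [main n]
    have : f + (Real.cos (θ/2)) ^ n • mulVecE (L (n * θ / 2)) (x - f) - f
        = (Real.cos (θ/2)) ^ n • mulVecE (L (n * θ / 2)) (x - f) := by abel
    rw [this, norm_smul, norm_mulVecE]
    simp [abs_pow]
end

section
/- Let 0 < θ < 2π, θ ≠ π, ξ > 0, f = (ξ, 0), and T x = f + cos(θ/2)·L_{θ/2}(x − f) on ℝ². Then T is invertible and M := T⁻¹ − Id is given by M x = tan(θ/2)·A(x − f), where A is the matrix with rows (0, 1) and (−1, 0); moreover M is monotone: ⟨Mx − My, x − y⟩ = 0 ≥ 0 for all x, y. -/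
open Real

theorem stmt_19 (θ ξ : ℝ) (hθ : 0 < θ) (hθ' : θ < 2 * π) (hθπ : θ ≠ π) (hξ : 0 < ξ)
    (f : EuclideanSpace ℝ (Fin 2)) (hf : f = toE ![ξ, 0])
    (T : EuclideanSpace ℝ (Fin 2) → EuclideanSpace ℝ (Fin 2))
    (hT : ∀ x, T x = f + Real.cos (θ / 2) • mulVecE (L (θ / 2)) (x - f))
    (M : EuclideanSpace ℝ (Fin 2) → EuclideanSpace ℝ (Fin 2))
    (hM : ∀ x, M x = Function.invFun T x - x) :
    Function.Bijective T ∧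
    (∀ x, M x = Real.tan (θ / 2) • mulVecE !![0, 1; -1, 0] (x - f)) ∧
    (∀ x y, (inner ℝ (M x - M y) (x - y) : ℝ) = 0) := by
  have hc : Real.cos (θ / 2) ≠ 0 := by
    intro h
    rw [Real.cos_eq_zero_iff] at h
    obtain ⟨n, hn⟩ := h
    have hθe : θ = (2 * n + 1) * π := by
      field_simp at hn; linarith
    have hn0 : (0:ℝ) < 2 * n + 1 := by
      by_contra h'
      push_neg at h'
      nlinarith [Real.pi_pos]
    have hn2 : (2 * (n:ℝ) + 1) < 2 := by
      by_contra h'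
      push_neg at h'
      nlinarith [Real.pi_pos]
    have h1 : (0:ℤ) < 2 * n + 1 := by exact_mod_cast hn0
    have h2 : (2 * n + 1 : ℤ) < 2 := by exact_mod_cast hn2
    have hn : n = 0 := by omega
    apply hθπ
    rw [hθe, hn]; push_cast; ring
  set c := Real.cos (θ / 2) with hcdef
  set s := Real.sin (θ / 2) with hsdef
  have hpyth : c ^ 2 + s ^ 2 = 1 := by
    rw [hcdef, hsdef]; rw [add_comm]; exact Real.sin_sq_add_cos_sq _
  -- explicit inverse
  set S : EuclideanSpace ℝ (Fin 2) → EuclideanSpace ℝ (Fin 2) :=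
    fun y => f + c⁻¹ • mulVecE (L (-(θ / 2))) (y - f) with hS
  have hST : ∀ y, T (S y) = y := by
    intro y
    rw [hT, hS]
    simp only
    ext i
    fin_cases i
    · simp [mulVecE, L, Matrix.mulVec, dotProduct, Fin.sum_univ_two,
        PiLp.add_apply, PiLp.toLp_apply, PiLp.sub_apply, PiLp.smul_apply, smul_eq_mul, Real.cos_neg,
        Real.sin_neg, ← hcdef, ← hsdef]
      field_simp
      linear_combination (y 0 - f 0) * hpyth
    · simp [mulVecE, L, Matrix.mulVec, dotProduct, Fin.sum_univ_two,
        PiLp.add_apply, PiLp.toLp_apply, PiLp.sub_apply, PiLp.smul_apply, smul_eq_mul, Real.cos_neg,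
        Real.sin_neg, ← hcdef, ← hsdef]
      field_simp
      linear_combination (y 1 - f 1) * hpyth
  have hTS : ∀ x, S (T x) = x := by
    intro x
    rw [hT, hS]
    simp only
    ext i
    fin_cases i
    · simp [mulVecE, L, Matrix.mulVec, dotProduct, Fin.sum_univ_two,
        PiLp.add_apply, PiLp.toLp_apply, PiLp.sub_apply, PiLp.smul_apply, smul_eq_mul, Real.cos_neg,
        Real.sin_neg, ← hcdef, ← hsdef]
      field_simp
      linear_combination (x 0 - f 0) * hpyth
    · simp [mulVecE, L, Matrix.mulVec, dotProduct, Fin.sum_univ_two,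
        PiLp.add_apply, PiLp.toLp_apply, PiLp.sub_apply, PiLp.smul_apply, smul_eq_mul, Real.cos_neg,
        Real.sin_neg, ← hcdef, ← hsdef]
      field_simp
      linear_combination (x 1 - f 1) * hpyth
  have hbij : Function.Bijective T :=
    ⟨Function.LeftInverse.injective hTS, Function.RightInverse.surjective hST⟩
  have hinv : ∀ x, Function.invFun T x = S x := by
    intro x
    apply hbij.injective
    rw [Function.invFun_eq (hbij.surjective x), hST]
  have hMx : ∀ x, M x = Real.tan (θ / 2) • mulVecE !![0, 1; -1, 0] (x - f) := by
    intro x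
    rw [hM, hinv, hS]
    simp only
    ext i
    fin_cases i <;>
      simp [mulVecE, L, Matrix.mulVec, dotProduct, Fin.sum_univ_two,
        PiLp.add_apply, PiLp.toLp_apply, PiLp.sub_apply, PiLp.smul_apply, smul_eq_mul, Real.cos_neg,
        Real.sin_neg, Real.tan_eq_sin_div_cos, ← hcdef, ← hsdef] <;>
      field_simp <;> ring
  refine ⟨hbij, hMx, ?_⟩
  intro x y
  rw [hMx, hMx]
  simp only [PiLp.inner_apply, RCLike.inner_apply, conj_trivial, Fin.sum_univ_two,
    PiLp.sub_apply, PiLp.smul_apply, smul_eq_mul, mulVecE, Matrix.mulVec,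
    dotProduct]
  simp [Fin.sum_univ_two]
  ring
end
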